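/- Let α₀ be a unit of R such that x^n − α₀ is basic irreducible over R, let α = α₀^{p^s}, write f = x^n − α₀, and let K = R[x]/⟨x^{np^s} − α⟩. Then: (a) for 0 ≤ τ < p^s, the ideal ⟨γ f^τ⟩ of K has exactly p^{mn(p^s − τ)} elements; (b) if I = ⟨f^ω + γ f^t G, γ f^μ⟩ is an ideal of K with 0 < ω < p^s, G either 0 or a unit of K, 0 ≤ t < μ when G ≠ 0, and 0 ≤ μ < κ, where κ is the least nonnegative integer such that γ f^κ ∈ ⟨f^ω + γ f^t G⟩, then I has exactly p^{mn(2p^s − μ − ω)} elements. -/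

import Mathlib

open Polynomial

section StmtAux

lemma card_quot_span_monic {F : Type*} [CommRing F] [Finite F] {g : F[X]} (hg : g.Monic) :
    Nat.card (F[X] ⧸ Ideal.span {g}) = Nat.card F ^ g.natDegree := by
  haveI : Fintype F := Fintype.ofFinite F
  let pb := AdjoinRoot.powerBasis' hg
  have e : (F[X] ⧸ Ideal.span {g}) ≃ₗ[F] (Fin pb.dim → F) := pb.basis.equivFun
  rw [Nat.card_congr e.toEquiv, Nat.card_fun]
  simp [pb, Nat.card_eq_fintype_card]

lemma card_eq_of_ker_eq {R A B : Type*} [CommRing R] [Semiring A] [Semiring B]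
    {f : R →+* A} {g : R →+* B} (hf : Function.Surjective f) (hg : Function.Surjective g)
    (h : RingHom.ker f = RingHom.ker g) : Nat.card A = Nat.card B := by
  rw [← Nat.card_congr (RingHom.quotientKerEquivOfSurjective hf).toEquiv,
    ← Nat.card_congr (RingHom.quotientKerEquivOfSurjective hg).toEquiv, h]

lemma map_mk_eq_zero_iff {R : Type*} [CommRing R] (γ : R) (u : R[X]) :
    u.map (Ideal.Quotient.mk (Ideal.span {γ})) = 0 ↔ u ∈ Ideal.span {(C γ : R[X])} := by
  have h1 : Ideal.span {(C γ : R[X])} = Ideal.map C (Ideal.span {γ}) := by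
    rw [Ideal.map_span, Set.image_singleton]
  rw [h1, Ideal.mem_map_C_iff]
  simp [Polynomial.ext_iff, Ideal.Quotient.eq_zero_iff_mem, coeff_map]

lemma card_target_of_ker {R : Type*} [CommRing R] [Finite R] (γ : R) {W : R[X]}
    (hW : (W.map (Ideal.Quotient.mk (Ideal.span {γ}))).Monic)
    {A : Type*} [CommRing A] (θ : R[X] →+* A) (hsurj : Function.Surjective θ)
    (hker : RingHom.ker θ = Ideal.span {(C γ : R[X]), W}) :
    Nat.card A
      = Nat.card (R ⧸ Ideal.span {γ}) ^ (W.map (Ideal.Quotient.mk (Ideal.span {γ}))).natDegree := by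
  set mkR := Ideal.Quotient.mk (Ideal.span {γ})
  set Wb := W.map mkR
  set θ₂ : R[X] →+* ((R ⧸ Ideal.span {γ})[X] ⧸ Ideal.span {Wb}) :=
    (Ideal.Quotient.mk (Ideal.span {Wb})).comp (mapRingHom mkR) with hθ₂
  have hsurj₂ : Function.Surjective θ₂ :=
    (Ideal.Quotient.mk_surjective).comp (Polynomial.map_surjective mkR Ideal.Quotient.mk_surjective)
  have hker₂ : RingHom.ker θ₂ = Ideal.span {(C γ : R[X]), W} := by
    ext g
    rw [RingHom.mem_ker, hθ₂, RingHom.comp_apply, Ideal.Quotient.eq_zero_iff_mem,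
      Ideal.mem_span_singleton']
    constructor
    · rintro ⟨c, hc⟩
      obtain ⟨c', rfl⟩ := Polynomial.map_surjective mkR Ideal.Quotient.mk_surjective c
      have h0 : (g - c' * W).map mkR = 0 := by
        simp only [Polynomial.map_sub, Polynomial.map_mul, coe_mapRingHom] at hc ⊢
        rw [← hc]; ring
      rw [map_mk_eq_zero_iff, Ideal.mem_span_singleton'] at h0
      obtain ⟨d, hd⟩ := h0
      rw [Ideal.mem_span_pair]
      exact ⟨d, c', by linear_combination hd⟩
    · rw [Ideal.mem_span_pair]
      rintro ⟨a, b, rfl⟩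
      refine ⟨(a.map mkR) * (C (mkR γ)) * 0 + (b.map mkR), ?_⟩
      simp only [coe_mapRingHom, Polynomial.map_add, Polynomial.map_mul, map_C]
      have : mkR γ = 0 := by
        rw [Ideal.Quotient.eq_zero_iff_mem]; exact Ideal.subset_span rfl
      rw [this]
      simp only [map_zero, zero_mul, mul_zero, zero_add]
      rfl
  haveI : Finite (R ⧸ Ideal.span {γ}) := Quotient.finite _
  rw [card_eq_of_ker_eq hsurj hsurj₂ (hker.trans hker₂.symm)]
  exact card_quot_span_monic hW

lemma card_span_aux {R : Type*} [CommRing R] [Finite R] (γ : R) {W b₀ : R[X]}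
    (hW : (W.map (Ideal.Quotient.mk (Ideal.span {γ}))).Monic)
    {T : Type*} [CommRing T] (ρ : R[X] →+* T) (hρ : Function.Surjective ρ)
    (hker1 : ∀ g : R[X], ρ g * ρ b₀ = 0 → g ∈ Ideal.span {(C γ : R[X]), W})
    (hker2 : ρ (C γ) * ρ b₀ = 0) (hker3 : ρ W * ρ b₀ = 0)
    (hkerρ : RingHom.ker ρ ≤ Ideal.span {(C γ : R[X]), W}) :
    Nat.card ↥(Ideal.span {ρ b₀})
      = Nat.card (R ⧸ Ideal.span {γ}) ^ (W.map (Ideal.Quotient.mk (Ideal.span {γ}))).natDegree := by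
  set b := ρ b₀ with hb
  set Λ : T →ₗ[T] T := LinearMap.toSpanSingleton T T b with hΛ
  have hrange : LinearMap.range Λ = (Ideal.span {b} : Ideal T) := by
    ext x
    simp only [LinearMap.mem_range, hΛ, LinearMap.toSpanSingleton_apply, smul_eq_mul,
      Ideal.mem_span_singleton']
  have hkerΛ : LinearMap.ker Λ = (Ideal.span {ρ (C γ), ρ W} : Ideal T) := by
    ext x
    simp only [LinearMap.mem_ker, hΛ, LinearMap.toSpanSingleton_apply, smul_eq_mul]
    constructor
    · intro hx
      obtain ⟨g, rfl⟩ := hρ x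
      obtain ⟨a, c, hac⟩ := Ideal.mem_span_pair.1 (hker1 g hx)
      exact Ideal.mem_span_pair.2 ⟨ρ a, ρ c, by rw [← map_mul, ← map_mul, ← map_add, hac]⟩
    · intro hx
      obtain ⟨a, c, hac⟩ := Ideal.mem_span_pair.1 hx
      rw [← hac, add_mul, mul_assoc, mul_assoc, hker2, hker3, mul_zero, mul_zero, add_zero]
  have e1 : Nat.card ↥(Ideal.span {b}) = Nat.card (T ⧸ LinearMap.ker Λ) := by
    rw [← hrange]
    exact (Nat.card_congr Λ.quotKerEquivRange.toEquiv).symm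
  rw [e1, hkerΛ]
  set J : Ideal T := Ideal.span {ρ (C γ), ρ W} with hJ
  set θ : R[X] →+* T ⧸ J := (Ideal.Quotient.mk J).comp ρ with hθ
  have hθs : Function.Surjective θ := Ideal.Quotient.mk_surjective.comp hρ
  have hθker : RingHom.ker θ = Ideal.span {(C γ : R[X]), W} := by
    ext g
    rw [RingHom.mem_ker, hθ, RingHom.comp_apply, Ideal.Quotient.eq_zero_iff_mem, hJ]
    constructor
    · intro hg
      obtain ⟨a, c, hac⟩ := Ideal.mem_span_pair.1 hg
      obtain ⟨a', rfl⟩ := hρ a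
      obtain ⟨c', rfl⟩ := hρ c
      have hk : g - (a' * C γ + c' * W) ∈ RingHom.ker ρ := by
        rw [RingHom.mem_ker, map_sub, map_add, map_mul, map_mul, hac, sub_self]
      have h2 := hkerρ hk
      have h3 : a' * C γ + c' * W ∈ Ideal.span {(C γ : R[X]), W} :=
        Ideal.mem_span_pair.2 ⟨a', c', rfl⟩
      simpa using add_mem h2 h3
    · intro hg
      obtain ⟨a, c, hac⟩ := Ideal.mem_span_pair.1 hg
      exact Ideal.mem_span_pair.2 ⟨ρ a, ρ c, by rw [← map_mul, ← map_mul, ← map_add, hac]⟩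
  exact card_target_of_ker γ hW θ hθs hθker

end StmtAux

set_option maxHeartbeats 1600000 in
set_option synthInstance.maxHeartbeats 400000 in
/-- cardinalities of the Type II and Type IV ideals of
`K = R[x]/⟨x^{np^s} − α₀^{p^s}⟩`, with `f = x^n − α₀` basic irreducible. -/
theorem stmt10 {R : Type} [CommRing R] [Finite R]
    (p m s n : ℕ) (hp : p.Prime) (hm : 0 < m) (hs : 0 < s) (hn : 0 < n)
    (hnp : Nat.gcd n p = 1)
    (γ : R) (hγ : γ ≠ 0) (hγ2 : γ ^ 2 = 0)
    (hmax : ∀ a : R, a ∈ Ideal.span {γ} ↔ ¬ IsUnit a)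
    (hres : Nat.card (R ⧸ Ideal.span {γ}) = p ^ m)
    (α₀ : R) (hα₀ : IsUnit α₀)
    (hirr : Irreducible ((X ^ n - C α₀ : R[X]).map (Ideal.Quotient.mk (Ideal.span {γ})))) :
    (∀ τ, τ < p ^ s →
      Nat.card ↥(Ideal.span {Ideal.Quotient.mk
          (Ideal.span {(X ^ (n * p ^ s) - C (α₀ ^ p ^ s) : R[X])})
          (C γ * (X ^ n - C α₀) ^ τ)}) = p ^ (m * n * (p ^ s - τ))) ∧
    (∀ ω t μ : ℕ, ∀ G : R[X] ⧸ Ideal.span {(X ^ (n * p ^ s) - C (α₀ ^ p ^ s) : R[X])},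
      0 < ω → ω < p ^ s → (G = 0 ∨ IsUnit G) → (G ≠ 0 → t < μ) →
      ∀ κ : ℕ,
        IsLeast {k : ℕ |
          Ideal.Quotient.mk (Ideal.span {(X ^ (n * p ^ s) - C (α₀ ^ p ^ s) : R[X])}) (C γ) *
            (Ideal.Quotient.mk (Ideal.span {(X ^ (n * p ^ s) - C (α₀ ^ p ^ s) : R[X])})
              (X ^ n - C α₀)) ^ k ∈
          Ideal.span {Ideal.Quotient.mk
              (Ideal.span {(X ^ (n * p ^ s) - C (α₀ ^ p ^ s) : R[X])})
              ((X ^ n - C α₀) ^ ω) +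
            Ideal.Quotient.mk (Ideal.span {(X ^ (n * p ^ s) - C (α₀ ^ p ^ s) : R[X])})
              (C γ * (X ^ n - C α₀) ^ t) * G}} κ →
        μ < κ →
        Nat.card ↥(Ideal.span {Ideal.Quotient.mk
              (Ideal.span {(X ^ (n * p ^ s) - C (α₀ ^ p ^ s) : R[X])})
              ((X ^ n - C α₀) ^ ω) +
            Ideal.Quotient.mk (Ideal.span {(X ^ (n * p ^ s) - C (α₀ ^ p ^ s) : R[X])})
              (C γ * (X ^ n - C α₀) ^ t) * G,
            Ideal.Quotient.mk (Ideal.span {(X ^ (n * p ^ s) - C (α₀ ^ p ^ s) : R[X])})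
              (C γ * (X ^ n - C α₀) ^ μ)}) = p ^ (m * n * (2 * p ^ s - μ - ω))) := by
  classical
  have hann : ∀ r : R, γ * r = 0 → r ∈ Ideal.span {γ} := by
    intro r hr
    by_contra hru
    have hu : IsUnit r := by by_contra h; exact hru ((hmax r).2 h)
    obtain ⟨b, hb⟩ := hu.exists_right_inv
    exact hγ (by calc γ = γ * (r * b) := by rw [hb, mul_one]
      _ = γ * r * b := by ring
      _ = 0 := by rw [hr, zero_mul])
  haveI hIM : (Ideal.span {γ}).IsMaximal := by
    rw [Ideal.isMaximal_iff]
    constructor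
    · exact fun h1 => (hmax 1).1 h1 isUnit_one
    · intro J x hIJ hxI hxJ
      have hux : IsUnit x := by
        by_contra h; exact hxI ((hmax x).2 h)
      obtain ⟨b, hb⟩ := hux.exists_right_inv
      exact hb ▸ J.mul_mem_right b hxJ
  letI : Field (R ⧸ Ideal.span {γ}) := Ideal.Quotient.field _
  haveI : Finite (R ⧸ Ideal.span {γ}) := Quotient.finite _
  haveI : Fintype (R ⧸ Ideal.span {γ}) := Fintype.ofFinite _
  -- characteristic p
  obtain ⟨q, hq⟩ := CharP.exists (R ⧸ Ideal.span {γ})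
  haveI := hq
  obtain ⟨k, hqp, hcard⟩ := FiniteField.card (R ⧸ Ideal.span {γ}) q
  have hqeq : q = p := by
    have h1 : Fintype.card (R ⧸ Ideal.span {γ}) = p ^ m := by
      rw [← Nat.card_eq_fintype_card, hres]
    have hdvd : p ∣ q ^ (k : ℕ) := by
      rw [← hcard, h1]
      exact dvd_pow_self p hm.ne'
    exact ((Nat.prime_dvd_prime_iff_eq hp hqp).1 (hp.dvd_of_dvd_pow hdvd)).symm
  haveI hcharp : CharP (R ⧸ Ideal.span {γ}) p := hqeq ▸ hq
  haveI : Fact p.Prime := ⟨hp⟩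
  set mkR := Ideal.Quotient.mk (Ideal.span {γ}) with hmkR
  set f : R[X] := X ^ n - C α₀ with hfdef
  set P : R[X] := X ^ (n * p ^ s) - C (α₀ ^ p ^ s) with hPdef
  set Q : Ideal R[X] := Ideal.span {P} with hQdef
  set π := Ideal.Quotient.mk Q with hπdef
  have hπs : Function.Surjective π := Ideal.Quotient.mk_surjective
  set fb : (R ⧸ Ideal.span {γ})[X] := f.map mkR with hfb
  have hfbeq : fb = X ^ n - C (mkR α₀) := by
    rw [hfb, hfdef]; simp [Polynomial.map_sub, Polynomial.map_pow]
  have hfbmonic : fb.Monic := by rw [hfbeq]; exact monic_X_pow_sub_C _ hn.ne'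
  have hfbdeg : fb.natDegree = n := by rw [hfbeq]; exact natDegree_X_pow_sub_C
  have hfrob : P.map mkR = fb ^ (p ^ s) := by
    rw [hfbeq, sub_pow_char_pow, hPdef]
    simp [Polynomial.map_sub, Polynomial.map_pow, ← pow_mul]
  -- f ^ p ^ s = P + C γ * h
  obtain ⟨h, hh⟩ : ∃ h : R[X], f ^ p ^ s = P + C γ * h := by
    have h0 : (f ^ p ^ s - P).map mkR = 0 := by
      rw [Polynomial.map_sub, Polynomial.map_pow, ← hfb, hfrob, sub_self]
    rw [map_mk_eq_zero_iff, Ideal.mem_span_singleton'] at h0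
    obtain ⟨a, ha⟩ := h0
    exact ⟨a, by linear_combination -ha⟩
  set γK := π (C γ) with hγK
  set fK := π f with hfK
  have hγK2 : γK * γK = 0 := by
    rw [hγK, ← map_mul, ← C_mul, ← pow_two, hγ2, map_zero, map_zero]
  have hP0 : π P = 0 := by
    rw [hπdef, Ideal.Quotient.eq_zero_iff_mem, hQdef]
    exact Ideal.subset_span rfl
  have hfps : fK ^ p ^ s = γK * π h := by
    rw [hfK, ← map_pow, hh, map_add, hP0, zero_add, map_mul, hγK]
  have hγfps : γK * fK ^ p ^ s = 0 := by
    rw [hfps, ← mul_assoc, hγK2, zero_mul]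
  have hπγf : ∀ j : ℕ, π (C γ * f ^ j) = γK * fK ^ j := by
    intro j; rw [map_mul, map_pow]
  have hγγ : γ * γ = 0 := by rw [← pow_two]; exact hγ2
  have hγ0 : mkR γ = 0 := by
    rw [hmkR, Ideal.Quotient.eq_zero_iff_mem]; exact Ideal.subset_span rfl
  have hCγ0 : (C γ : R[X]).map mkR = 0 := by rw [map_C, hγ0, map_zero]
  have hB : ∀ (g : R[X]) (ω j : ℕ), ω + j = p ^ s →
      g * f ^ ω ∈ Ideal.span {(C γ : R[X]), f ^ p ^ s} →
      g ∈ Ideal.span {(C γ : R[X]), f ^ j} := by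
    intro g ω j hωj hmem
    obtain ⟨a, b, hab⟩ := Ideal.mem_span_pair.1 hmem
    have hmap : ((g - b * f ^ j).map mkR) * fb ^ ω = 0 := by
      have h2 := congrArg (Polynomial.map mkR) hab
      simp only [Polynomial.map_add, Polynomial.map_mul, Polynomial.map_pow, ← hfb, hCγ0,
        mul_zero, zero_add] at h2
      rw [Polynomial.map_sub, Polynomial.map_mul, Polynomial.map_pow, ← hfb]
      rw [← hωj, pow_add] at h2
      linear_combination -h2
    have h3 : (g - b * f ^ j).map mkR = 0 := by
      rcases mul_eq_zero.1 hmap with h' | h'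
      · exact h'
      · exact absurd h' (pow_ne_zero _ hfbmonic.ne_zero)
    rw [hmkR, map_mk_eq_zero_iff, Ideal.mem_span_singleton'] at h3
    obtain ⟨d, hd⟩ := h3
    exact Ideal.mem_span_pair.2 ⟨d, b, by linear_combination hd⟩
  have hA : ∀ (g : R[X]) (τ j : ℕ), τ + j = p ^ s →
      g * (C γ * f ^ τ) ∈ Q → g ∈ Ideal.span {(C γ : R[X]), f ^ j} := by
    intro g τ j hτj hmem
    rw [hQdef, Ideal.mem_span_singleton'] at hmem
    obtain ⟨a, ha⟩ := hmem
    have ha0 : a.map mkR = 0 := by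
      have h2 := congrArg (Polynomial.map mkR) ha
      simp only [Polynomial.map_mul, hfrob, hCγ0, mul_zero, zero_mul] at h2
      rcases mul_eq_zero.1 h2 with h' | h'
      · exact h'
      · exact absurd h' (pow_ne_zero _ hfbmonic.ne_zero)
    rw [hmkR, map_mk_eq_zero_iff, Ideal.mem_span_singleton'] at ha0
    obtain ⟨a2, ha2⟩ := ha0
    have hW2 : (g * f ^ τ - a2 * P).map mkR = 0 := by
      have h3 : (C γ : R[X]) * (g * f ^ τ - a2 * P) = 0 := by
        linear_combination -ha - P * ha2
      rw [hmkR]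
      ext i
      rw [coeff_map, coeff_zero, Ideal.Quotient.eq_zero_iff_mem]
      apply hann
      calc γ * ((g * f ^ τ - a2 * P).coeff i)
          = ((C γ : R[X]) * (g * f ^ τ - a2 * P)).coeff i := (coeff_C_mul _).symm
        _ = 0 := by rw [h3, coeff_zero]
    have h4 : ((g - a2 * f ^ j).map mkR) * fb ^ τ = 0 := by
      simp only [Polynomial.map_sub, Polynomial.map_mul, Polynomial.map_pow, ← hfb] at hW2 ⊢
      rw [hfrob, ← hτj, pow_add] at hW2
      linear_combination hW2
    have h5 : (g - a2 * f ^ j).map mkR = 0 := by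
      rcases mul_eq_zero.1 h4 with h' | h'
      · exact h'
      · exact absurd h' (pow_ne_zero _ hfbmonic.ne_zero)
    rw [hmkR, map_mk_eq_zero_iff, Ideal.mem_span_singleton'] at h5
    obtain ⟨d, hd⟩ := h5
    exact Ideal.mem_span_pair.2 ⟨d, a2, by linear_combination hd⟩
  have carda : ∀ τ j : ℕ, τ + j = p ^ s →
      Nat.card ↥(Ideal.span {π (C γ * f ^ τ)}) = p ^ (m * (j * n)) := by
    intro τ j hτj
    have hWm : ((f ^ j).map mkR).Monic := by
      rw [Polynomial.map_pow, ← hfb]; exact hfbmonic.pow _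
    have hWdeg : ((f ^ j).map mkR).natDegree = j * n := by
      rw [Polynomial.map_pow, ← hfb, natDegree_pow, hfbdeg]
    have hk1 : ∀ g : R[X], π g * π (C γ * f ^ τ) = 0 → g ∈ Ideal.span {(C γ : R[X]), f ^ j} := by
      intro g hg
      rw [← map_mul, hπdef, Ideal.Quotient.eq_zero_iff_mem] at hg
      exact hA g τ j hτj hg
    have hk2 : π (C γ) * π (C γ * f ^ τ) = 0 := by
      rw [← map_mul, ← mul_assoc, ← C_mul, hγγ, map_zero, zero_mul, map_zero]
    have hk3 : π (f ^ j) * π (C γ * f ^ τ) = 0 := by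
      rw [← map_mul]
      have he : f ^ j * (C γ * f ^ τ) = C γ * f ^ p ^ s := by
        rw [← hτj, pow_add]; ring
      rw [he, hπγf, hγfps]
    have hk4 : RingHom.ker π ≤ Ideal.span {(C γ : R[X]), f ^ j} := by
      rw [hπdef, Ideal.mk_ker, hQdef, Ideal.span_le, Set.singleton_subset_iff]
      have hpow : f ^ τ * f ^ j = f ^ p ^ s := by rw [← pow_add, hτj]
      exact Ideal.mem_span_pair.2 ⟨-h, f ^ τ, by linear_combination hh + hpow⟩
    have h1 := card_span_aux γ hWm π hπs hk1 hk2 hk3 hk4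
    rw [← hmkR] at h1
    rw [h1, hWdeg, hres, ← pow_mul]
  constructor
  · intro τ hτ
    rw [carda τ (p ^ s - τ) (by omega)]
    congr 1
    have : m * n * (p ^ s - τ) = m * ((p ^ s - τ) * n) := by
      rw [mul_assoc, mul_comm n]
    rw [this]
  · intro ω t μ G hω0 hωs hG htμ κ hκ hμκ
    set g1 : R[X] ⧸ Q := π (f ^ ω) + π (C γ * f ^ t) * G with hg1
    have hπfω : π (f ^ ω) = fK ^ ω := by rw [map_pow, hfK]
    have hγg1 : γK * g1 = γK * fK ^ ω := by
      rw [hg1, hπγf, mul_add, hπfω]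
      have h0 : γK * (γK * fK ^ t * G) = (γK * γK) * (fK ^ t * G) := by ring
      rw [h0, hγK2, zero_mul, add_zero]
    have hωmem : ω ∈ {k : ℕ | γK * fK ^ k ∈ Ideal.span {g1}} := by
      show γK * fK ^ ω ∈ Ideal.span {g1}
      rw [← hγg1]
      exact Ideal.mul_mem_left _ _ (Ideal.subset_span rfl)
    have hκω : κ ≤ ω := hκ.2 hωmem
    have hμω : μ < ω := lt_of_lt_of_le hμκ hκω
    have hμps : μ < p ^ s := lt_trans hμω hωs
    set I2 : Ideal (R[X] ⧸ Q) := Ideal.span {g1, π (C γ * f ^ μ)} with hI2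
    set V : Ideal (R[X] ⧸ Q) := Ideal.span {γK} with hV
    set φ := Ideal.Quotient.mk V with hφdef
    have hφγK : φ γK = 0 := by
      rw [hφdef, Ideal.Quotient.eq_zero_iff_mem, hV]
      exact Ideal.subset_span rfl
    have hΨker : ∀ g : R[X], φ (π g) = 0 ↔ g ∈ Ideal.span {(C γ : R[X]), f ^ p ^ s} := by
      intro g
      constructor
      · intro hg
        rw [hφdef, Ideal.Quotient.eq_zero_iff_mem, hV, Ideal.mem_span_singleton'] at hg
        obtain ⟨c, hc⟩ := hg
        obtain ⟨c', rfl⟩ := hπs c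
        have h1 : π (g - c' * C γ) = 0 := by
          rw [map_sub, map_mul, ← hγK, hc, sub_self]
        rw [hπdef, Ideal.Quotient.eq_zero_iff_mem, hQdef, Ideal.mem_span_singleton'] at h1
        obtain ⟨d, hd⟩ := h1
        exact Ideal.mem_span_pair.2 ⟨c' - d * h, d, by linear_combination hd + d * hh⟩
      · intro hg
        obtain ⟨a, b, hab⟩ := Ideal.mem_span_pair.1 hg
        have h1 : π g = π a * γK + π b * (γK * π h) := by
          have h' : g = a * C γ + b * f ^ p ^ s := by linear_combination -hab
          have h'' := congrArg π h'
          simp only [map_add, map_mul, map_pow] at h''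
          rw [h'', ← hγK, ← hfK, hfps]
        rw [h1]
        simp only [map_add, map_mul, hφγK, zero_mul, mul_zero, add_zero]
        ring
    -- the hard intersection computation
    have mem2 : fK ^ (p ^ s - ω) * g1 ∈ Ideal.span {γK * fK ^ μ} := by
      have hwz : fK ^ (p ^ s - ω) * g1
          = γK * (π h + fK ^ ((p ^ s - ω) + t) * G) := by
        rw [hg1, hπγf, mul_add, hπfω]
        have e1 : fK ^ (p ^ s - ω) * fK ^ ω = γK * π h := by
          rw [← pow_add]
          have : p ^ s - ω + ω = p ^ s := by omega
          rw [this, hfps]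
        have e2 : fK ^ (p ^ s - ω) * (γK * fK ^ t * G)
            = γK * (fK ^ ((p ^ s - ω) + t) * G) := by
          rw [pow_add]; ring
        rw [e1, e2, mul_add]
      obtain ⟨Z, hZ⟩ := hπs (π h + fK ^ ((p ^ s - ω) + t) * G)
      by_cases hdvd : fb ^ p ^ s ∣ Z.map mkR
      · obtain ⟨c, hc⟩ := hdvd
        obtain ⟨c', hc'⟩ := Polynomial.map_surjective mkR Ideal.Quotient.mk_surjective c
        have h8 : (Z - f ^ p ^ s * c').map mkR = 0 := by
          rw [Polynomial.map_sub, Polynomial.map_mul, Polynomial.map_pow, ← hfb, hc', ← hc,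
            sub_self]
        rw [hmkR, map_mk_eq_zero_iff, Ideal.mem_span_singleton'] at h8
        obtain ⟨d, hd⟩ := h8
        have h9 : γK * π Z = 0 := by
          have hZeq : π Z = fK ^ p ^ s * π c' + π d * γK := by
            have h' : Z = f ^ p ^ s * c' + d * C γ := by linear_combination -hd
            have h'' := congrArg π h'
            simp only [map_add, map_mul, map_pow] at h''
            rw [h'', ← hγK, ← hfK]
          have h10 : γK * (fK ^ p ^ s * π c' + π d * γK)
              = (γK * γK) * (π h * π c' + π d) := by
            rw [hfps]; ring
          rw [hZeq, h10, hγK2, zero_mul]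
        rw [hwz, ← hZ, h9]
        exact Ideal.zero_mem _
      · set j := Nat.findGreatest (fun i => fb ^ i ∣ Z.map mkR) (p ^ s) with hjdef
        have hjdvd : fb ^ j ∣ Z.map mkR :=
          Nat.findGreatest_spec (P := fun i => fb ^ i ∣ Z.map mkR) (Nat.zero_le _) (by simp)
        have hjle : j ≤ p ^ s := Nat.findGreatest_le _
        have hjlt : j < p ^ s := by
          rcases lt_or_eq_of_le hjle with h' | h'
          · exact h'
          · exact absurd (h' ▸ hjdvd) hdvd
        have hjsucc : ¬ fb ^ (j + 1) ∣ Z.map mkR := by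
          refine Nat.findGreatest_is_greatest (P := fun i => fb ^ i ∣ Z.map mkR) (n := p ^ s) ?_ (by omega)
          rw [← hjdef]; omega
        obtain ⟨Vb, hVb⟩ := hjdvd
        have hVnd : ¬ fb ∣ Vb := by
          rintro ⟨u, hu⟩
          exact hjsucc ⟨u, by rw [hVb, hu]; ring⟩
        have hcop : IsCoprime (fb ^ p ^ s) Vb := (hirr.coprime_iff_not_dvd.2 hVnd).pow_left
        obtain ⟨ub, wb, huw⟩ := hcop
        obtain ⟨Vl, hVl⟩ := Polynomial.map_surjective mkR Ideal.Quotient.mk_surjective Vb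
        obtain ⟨Ul, hUl⟩ := Polynomial.map_surjective mkR Ideal.Quotient.mk_surjective ub
        obtain ⟨Wl, hWl⟩ := Polynomial.map_surjective mkR Ideal.Quotient.mk_surjective wb
        have h8 : (Z - f ^ j * Vl).map mkR = 0 := by
          rw [Polynomial.map_sub, Polynomial.map_mul, Polynomial.map_pow, ← hfb, hVl, ← hVb,
            sub_self]
        rw [hmkR, map_mk_eq_zero_iff, Ideal.mem_span_singleton'] at h8
        obtain ⟨d, hd⟩ := h8
        have hZeq : π Z = fK ^ j * π Vl + π d * γK := by
          have h' : Z = f ^ j * Vl + d * C γ := by linear_combination -hd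
          have h'' := congrArg π h'
          simp only [map_add, map_mul, map_pow] at h''
          rw [h'', ← hγK, ← hfK]
        have huw' : (Ul * f ^ p ^ s + Wl * Vl - 1).map mkR = 0 := by
          simp only [Polynomial.map_sub, Polynomial.map_add, Polynomial.map_mul,
            Polynomial.map_pow, Polynomial.map_one, ← hfb, hVl, hUl, hWl]
          rw [huw, sub_self]
        rw [hmkR, map_mk_eq_zero_iff, Ideal.mem_span_singleton'] at huw'
        obtain ⟨d2, hd2⟩ := huw'
        have hπuw : π Ul * fK ^ p ^ s + π Wl * π Vl = 1 + π d2 * γK := by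
          have h' : (Ul * f ^ p ^ s + Wl * Vl : R[X]) = 1 + d2 * C γ := by
            linear_combination -hd2
          have h'' := congrArg π h'
          simp only [map_add, map_mul, map_pow, map_one] at h''
          rw [← hγK, ← hfK] at h''
          exact h''
        have h10 : π Wl * π Vl = 1 + (π d2 - π Ul * π h) * γK := by
          rw [hfps] at hπuw
          linear_combination hπuw
        set vinv := π Wl * (1 - (π d2 - π Ul * π h) * γK) with hvinv
        have hunit : π Vl * vinv = 1 := by
          calc π Vl * vinv
              = (π Wl * π Vl) * (1 - (π d2 - π Ul * π h) * γK) := by rw [hvinv]; ring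
            _ = (1 + (π d2 - π Ul * π h) * γK) * (1 - (π d2 - π Ul * π h) * γK) := by rw [h10]
            _ = 1 - ((π d2 - π Ul * π h) * (π d2 - π Ul * π h)) * (γK * γK) := by ring
            _ = 1 := by rw [hγK2, mul_zero, sub_zero]
        have h12 : γK * π Z = (γK * fK ^ j) * π Vl := by
          rw [hZeq]
          linear_combination (π d) * hγK2
        have h13 : γK * π Z = fK ^ (p ^ s - ω) * g1 := by
          rw [hZ]; exact hwz.symm
        have hmemj : γK * fK ^ j ∈ Ideal.span {g1} := by
          have h11 : γK * fK ^ j = (fK ^ (p ^ s - ω) * vinv) * g1 := by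
            calc γK * fK ^ j = (γK * fK ^ j) * (π Vl * vinv) := by rw [hunit, mul_one]
              _ = ((γK * fK ^ j) * π Vl) * vinv := by ring
              _ = (γK * π Z) * vinv := by rw [h12]
              _ = (fK ^ (p ^ s - ω) * g1) * vinv := by rw [h13]
              _ = (fK ^ (p ^ s - ω) * vinv) * g1 := by ring
          exact Ideal.mem_span_singleton'.2 ⟨_, h11.symm⟩
        have hjκ : κ ≤ j := hκ.2 hmemj
        have hμj : μ ≤ j := le_of_lt (lt_of_lt_of_le hμκ hjκ)
        have hjsplit : fK ^ j = fK ^ μ * fK ^ (j - μ) := by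
          rw [← pow_add]
          congr 1
          omega
        have hfinal : fK ^ (p ^ s - ω) * g1 = (γK * fK ^ μ) * (fK ^ (j - μ) * π Vl) := by
          rw [← h13, h12, hjsplit]; ring
        exact Ideal.mem_span_singleton'.2 ⟨fK ^ (j - μ) * π Vl, by rw [hfinal]; ring⟩
    have hg1I : g1 ∈ I2 := Ideal.subset_span (Set.mem_insert _ _)
    have hg2I : π (C γ * f ^ μ) ∈ I2 :=
      Ideal.subset_span (Set.mem_insert_of_mem _ rfl)
    have hIV : I2 ⊓ V = Ideal.span {γK * fK ^ μ} := by
      apply le_antisymm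
      · intro x hx
        obtain ⟨hxI, hxV⟩ := Submodule.mem_inf.1 hx
        obtain ⟨a, b, hab⟩ := Ideal.mem_span_pair.1 hxI
        obtain ⟨a', rfl⟩ := hπs a
        have hφx : φ x = 0 := by rw [hφdef, Ideal.Quotient.eq_zero_iff_mem]; exact hxV
        have hψa : φ (π (a' * f ^ ω)) = 0 := by
          have e3 : φ (π (a' * f ^ ω)) = φ x := by
            rw [← hab, hg1]
            simp only [hπγf, map_add, map_mul, map_pow, hφγK, zero_mul, mul_zero, add_zero]
            ring
          rw [e3, hφx]
        have h7 := hB a' ω (p ^ s - ω) (by omega) ((hΨker _).1 hψa)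
        obtain ⟨a1, a2, ha12⟩ := Ideal.mem_span_pair.1 h7
        have hπa : π a' = π a1 * γK + π a2 * fK ^ (p ^ s - ω) := by
          have h' : a' = a1 * C γ + a2 * f ^ (p ^ s - ω) := by linear_combination -ha12
          have h'' := congrArg π h'
          simp only [map_add, map_mul, map_pow] at h''
          rw [h'', ← hγK, ← hfK]
        have mem1 : γK * g1 ∈ Ideal.span {γK * fK ^ μ} := by
          rw [hγg1]
          have : γK * fK ^ ω = (γK * fK ^ μ) * fK ^ (ω - μ) := by
            rw [mul_assoc, ← pow_add]
            congr 2
            omega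
          rw [this]
          exact Ideal.mul_mem_right _ _ (Ideal.subset_span rfl)
        have mem3 : π (C γ * f ^ μ) ∈ Ideal.span {γK * fK ^ μ} := by
          rw [hπγf]
          exact Ideal.subset_span rfl
        have hx2 : x = π a1 * (γK * g1) + π a2 * (fK ^ (p ^ s - ω) * g1)
            + b * π (C γ * f ^ μ) := by
          rw [← hab, hπa]; ring
        rw [hx2]
        exact add_mem (add_mem (Ideal.mul_mem_left _ _ mem1) (Ideal.mul_mem_left _ _ mem2))
          (Ideal.mul_mem_left _ _ mem3)
      · rw [Ideal.span_le, Set.singleton_subset_iff, SetLike.mem_coe, Submodule.mem_inf]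
        constructor
        · rw [← hπγf]; exact hg2I
        · exact Ideal.mem_span_singleton'.2 ⟨fK ^ μ, by ring⟩
    -- counting
    set Λ2 : ↥I2 →ₗ[R[X] ⧸ Q] (R[X] ⧸ Q) ⧸ V :=
      (Submodule.mkQ V).comp (Submodule.subtype I2) with hΛ2
    have hcard1 : Nat.card ↥I2
        = Nat.card ↥(LinearMap.ker Λ2) * Nat.card ↥(LinearMap.range Λ2) := by
      rw [Submodule.card_eq_card_quotient_mul_card (LinearMap.ker Λ2)]
      rw [Nat.card_congr Λ2.quotKerEquivRange.toEquiv]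
    have hker2' : LinearMap.ker Λ2 = Submodule.comap (Submodule.subtype I2) (I2 ⊓ V) := by
      rw [hΛ2, LinearMap.ker_comp, Submodule.ker_mkQ]
      ext x
      simp only [Submodule.mem_comap, Submodule.mem_inf, Submodule.coe_subtype]
      exact ⟨fun hxv => ⟨x.2, hxv⟩, fun hh2 => hh2.2⟩
    have hle : Ideal.span {γK * fK ^ μ} ≤ I2 := by
      rw [Ideal.span_le, Set.singleton_subset_iff, SetLike.mem_coe, ← hπγf]
      exact hg2I
    have hkcard : Nat.card ↥(LinearMap.ker Λ2) = Nat.card ↥(Ideal.span {γK * fK ^ μ}) := by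
      rw [hker2', hIV]
      exact Nat.card_congr (Submodule.comapSubtypeEquivOfLe hle).toEquiv
    have hφg1 : φ g1 = φ (π (f ^ ω)) := by
      have e4 : φ (π (C γ * f ^ t) * G) = 0 := by
        rw [hπγf, map_mul, map_mul, hφγK]
        ring
      rw [hg1, map_add, e4, add_zero]
    have hrangemem : ∀ x : (R[X] ⧸ Q) ⧸ V,
        x ∈ LinearMap.range Λ2 ↔ x ∈ Ideal.span {φ (π (f ^ ω))} := by
      intro x
      constructor
      · rintro ⟨⟨y, hy⟩, rfl⟩
        obtain ⟨a, b, hab⟩ := Ideal.mem_span_pair.1 hy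
        have e5 : Λ2 ⟨y, hy⟩ = φ y := by
          rw [hΛ2]
          rfl
        rw [e5, ← hab, map_add, map_mul, map_mul, hφg1]
        have e6 : φ (π (C γ * f ^ μ)) = 0 := by
          rw [hπγf, map_mul, hφγK]
          ring
        rw [e6, show φ a * φ (π (f ^ ω)) + φ b * 0 = φ a * φ (π (f ^ ω)) by ring]
        exact Ideal.mem_span_singleton'.2 ⟨φ a, rfl⟩
      · intro hx
        obtain ⟨c, hc⟩ := Ideal.mem_span_singleton'.1 hx
        obtain ⟨c0, rfl⟩ := Ideal.Quotient.mk_surjective c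
        refine ⟨⟨c0 * g1, I2.mul_mem_left c0 hg1I⟩, ?_⟩
        have e5 : Λ2 ⟨c0 * g1, I2.mul_mem_left c0 hg1I⟩ = φ (c0 * g1) := by
          rw [hΛ2]
          rfl
        rw [e5, map_mul, hφg1]
        exact hc
    have hrcard : Nat.card ↥(LinearMap.range Λ2)
        = Nat.card ↥(Ideal.span {φ (π (f ^ ω))}) :=
      Nat.card_congr (Equiv.subtypeEquivRight hrangemem)
    -- card of the range ideal via card_span_aux
    have hrangeval : Nat.card ↥(Ideal.span {φ (π (f ^ ω))})
        = p ^ (m * ((p ^ s - ω) * n)) := by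
      set Ψ : R[X] →+* ((R[X] ⧸ Q) ⧸ V) := φ.comp π with hΨ
      have hΨap : ∀ g : R[X], Ψ g = φ (π g) := fun g => rfl
      have hΨs : Function.Surjective Ψ := Ideal.Quotient.mk_surjective.comp hπs
      have hWm : ((f ^ (p ^ s - ω)).map mkR).Monic := by
        rw [Polynomial.map_pow, ← hfb]; exact hfbmonic.pow _
      have hWdeg : ((f ^ (p ^ s - ω)).map mkR).natDegree = (p ^ s - ω) * n := by
        rw [Polynomial.map_pow, ← hfb, natDegree_pow, hfbdeg]
      have hpow2 : f ^ (p ^ s - ω) * f ^ ω = f ^ p ^ s := by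
        rw [← pow_add]
        congr 1
        omega
      have hΨfps : Ψ (f ^ p ^ s) = 0 := by
        rw [hΨap]
        exact (hΨker _).2 (Ideal.mem_span_pair.2 ⟨0, 1, by ring⟩)
      have hk1 : ∀ g : R[X], Ψ g * Ψ (f ^ ω) = 0 →
          g ∈ Ideal.span {(C γ : R[X]), f ^ (p ^ s - ω)} := by
        intro g hg
        rw [← map_mul] at hg
        rw [hΨap] at hg
        exact hB g ω (p ^ s - ω) (by omega) ((hΨker _).1 hg)
      have hk2 : Ψ (C γ) * Ψ (f ^ ω) = 0 := by
        have : Ψ (C γ) = 0 := by rw [hΨap, ← hγK, hφγK]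
        rw [this]
        ring
      have hk3 : Ψ (f ^ (p ^ s - ω)) * Ψ (f ^ ω) = 0 := by
        rw [← map_mul, hpow2, hΨfps]
      have hk4 : RingHom.ker Ψ ≤ Ideal.span {(C γ : R[X]), f ^ (p ^ s - ω)} := by
        intro g hg
        rw [RingHom.mem_ker, hΨap] at hg
        obtain ⟨a, b, hab⟩ := Ideal.mem_span_pair.1 ((hΨker _).1 hg)
        exact Ideal.mem_span_pair.2 ⟨a, b * f ^ ω, by linear_combination hab + b * hpow2⟩
      have h1 := card_span_aux (T := (R[X] ⧸ Q) ⧸ V) γ hWm Ψ hΨs hk1 hk2 hk3 hk4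
      rw [← hmkR] at h1
      rw [hΨap] at h1
      rw [h1, hWdeg, hres, ← pow_mul]
    -- card of the kernel ideal via carda
    have hc1 : Nat.card ↥(Ideal.span {γK * fK ^ μ}) = p ^ (m * ((p ^ s - μ) * n)) := by
      rw [← hπγf]
      exact carda μ (p ^ s - μ) (by omega)
    rw [hcard1, hkcard, hc1, hrcard, hrangeval, ← pow_add]
    congr 1
    have e7 : m * ((p ^ s - μ) * n) + m * ((p ^ s - ω) * n)
        = m * n * ((p ^ s - μ) + (p ^ s - ω)) := by ring
    rw [e7]
    congr 1
    omega
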